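/- Let C be a finite set with |C| ≥ 2, let {M_c}_{c∈C} be a POVM on ℂ^N, let {E_k}_{k∈K} be a finite Kraus family on ℂ^N with channel E, and let ρ be a density matrix on ℂ^N. Set p_c := Tr[M_c E(ρ)], let c* ∈ C satisfy p_{c*} ≥ p_c for all c ∈ C, and define ε_RLB(ρ) := min_{c ≠ c*} (1/2)(√(p_{c*}) − √(p_c))² and ε*(ρ) := inf { 1 − F(ρ, σ) : σ is a density matrix on ℂ^N and there exists c ≠ c* with Tr[(M_{c*} − M_c) E(σ)] ≤ 0 } (equal to +∞ if no such σ exists). Then: (i) ε_RLB(ρ) ≤ ε*(ρ); and (ii) for every density matrix σ_adv on ℂ^N such that Tr[(M_{c*} − M_c) E(σ_adv)] ≤ 0 for some c ≠ c*, it holds that ε*(ρ) ≤ 1 − F(ρ, σ_adv). -/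

import Mathlib

open Matrix
open scoped ComplexOrder

/-- Positive-semidefinite square root of a matrix (zero if not PSD). -/
noncomputable def psdSqrt {N : ℕ} (A : Matrix (Fin N) (Fin N) ℂ) :
    Matrix (Fin N) (Fin N) ℂ :=
  open scoped Classical in
  if h : A.PosSemidef then
    h.1.eigenvectorUnitary.1 * diagonal ((↑) ∘ (√·) ∘ h.1.eigenvalues) *
      (star h.1.eigenvectorUnitary : Matrix (Fin N) (Fin N) ℂ)
  else 0

/-- Root fidelity `Tr √(√ρ σ √ρ)`. -/
noncomputable def rootFidelity {N : ℕ} (ρ σ : Matrix (Fin N) (Fin N) ℂ) : ℝ :=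
  (psdSqrt (psdSqrt ρ * σ * psdSqrt ρ)).trace.re

/-- Fidelity `F(ρ,σ) = (Tr √(√ρ σ √ρ))²`. -/
noncomputable def fidelity {N : ℕ} (ρ σ : Matrix (Fin N) (Fin N) ℂ) : ℝ :=
  (rootFidelity ρ σ) ^ 2

/-- A density matrix: positive semidefinite with trace one. -/
def IsDensityMatrix {N : ℕ} (ρ : Matrix (Fin N) (Fin N) ℂ) : Prop :=
  ρ.PosSemidef ∧ ρ.trace = 1

/-- A POVM: a family of PSD matrices summing to the identity. -/
def IsPOVM {N : ℕ} {C : Type*} [Fintype C] (M : C → Matrix (Fin N) (Fin N) ℂ) : Prop :=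
  (∀ c, (M c).PosSemidef) ∧ ∑ c, M c = 1

/-- A Kraus family: `∑ Eₖᴴ Eₖ = I`. -/
def IsKrausFamily {N : ℕ} {K : Type*} [Fintype K] (E : K → Matrix (Fin N) (Fin N) ℂ) : Prop :=
  ∑ k, (E k)ᴴ * E k = 1

/-- The quantum channel associated with a Kraus family. -/
noncomputable def channel {N : ℕ} {K : Type*} [Fintype K]
    (E : K → Matrix (Fin N) (Fin N) ℂ) (σ : Matrix (Fin N) (Fin N) ℂ) :
    Matrix (Fin N) (Fin N) ℂ :=
  ∑ k, E k * σ * (E k)ᴴ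

/-- Minimum of `f` over all labels distinct from `cstar` (needs `|C| ≥ 2`). -/
noncomputable def minErase {C : Type*} [Fintype C] [DecidableEq C] {α : Type*} [LinearOrder α]
    (cstar : C) (h : 1 < Fintype.card C) (f : C → α) : α :=
  (Finset.univ.erase cstar).inf'
    ((Finset.erase_nonempty (Finset.mem_univ cstar)).mpr
      (Finset.one_lt_card_iff_nontrivial.mp (by simpa [Finset.card_univ] using h))) f



section Helpers

variable {n : Type*} [Fintype n] [DecidableEq n]

set_option linter.unusedSectionVars false

noncomputable def Matrix.PosSemidef.sqrt {A : Matrix n n ℂ} (hA : A.PosSemidef) :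
    Matrix n n ℂ :=
  hA.1.eigenvectorUnitary.1 * diagonal ((↑) ∘ (√·) ∘ hA.1.eigenvalues) *
    (star hA.1.eigenvectorUnitary : Matrix n n ℂ)

lemma aux_conj (U S D D' : Matrix n n ℂ) (h : S * U = 1) :
    U * D * S * (U * D' * S) = U * (D * D') * S := by
  simp only [Matrix.mul_assoc]
  rw [← Matrix.mul_assoc S U, h, Matrix.one_mul]

lemma Matrix.PosSemidef.posSemidef_sqrt {A : Matrix n n ℂ} (hA : A.PosSemidef) :
    hA.sqrt.PosSemidef := by
  unfold Matrix.PosSemidef.sqrt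
  have hD : (diagonal ((↑) ∘ (√·) ∘ hA.1.eigenvalues : n → ℂ)).PosSemidef :=
    Matrix.posSemidef_diagonal_iff.mpr fun i => by
      simp only [Function.comp_apply]
      exact Complex.zero_le_real.mpr (Real.sqrt_nonneg _)
  exact hD.mul_mul_conjTranspose_same (hA.1.eigenvectorUnitary : Matrix n n ℂ)

lemma Matrix.PosSemidef.sqrt_mul_self {A : Matrix n n ℂ} (hA : A.PosSemidef) :
    hA.sqrt * hA.sqrt = A := by
  unfold Matrix.PosSemidef.sqrt
  rw [aux_conj, Matrix.diagonal_mul_diagonal]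
  · have hs := hA.1.spectral_theorem
    rw [Unitary.conjStarAlgAut_apply] at hs
    refine Eq.trans ?_ hs.symm
    congr 2
    refine congrArg Matrix.diagonal (funext fun i => ?_)
    show (↑(√(hA.1.eigenvalues i)) : ℂ) * ↑(√(hA.1.eigenvalues i)) = ((hA.1.eigenvalues i : ℝ) : ℂ)
    rw [← Complex.ofReal_mul, Real.mul_self_sqrt (hA.eigenvalues_nonneg i)]
  · exact hA.1.eigenvectorUnitary.2.1

lemma trace_nonneg_of_psd {A : Matrix n n ℂ} (hA : A.PosSemidef) : 0 ≤ A.trace := by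
  rw [Matrix.trace]
  apply Finset.sum_nonneg
  intro i _
  exact hA.diag_nonneg

set_option maxHeartbeats 1000000 in
lemma trace_mul_psd_nonneg {A B : Matrix n n ℂ} (hA : A.PosSemidef) (hB : B.PosSemidef) :
    0 ≤ (A * B).trace := by
  have h1 : A * B = hA.sqrt * (hA.sqrt * B) := by
    rw [← Matrix.mul_assoc, hA.sqrt_mul_self]
  have h2 : (hA.sqrt * B * hA.sqrt).PosSemidef := by
    have := hB.mul_mul_conjTranspose_same hA.sqrt
    rwa [hA.posSemidef_sqrt.1.eq] at this
  calc (0:ℂ) ≤ (hA.sqrt * B * hA.sqrt).trace := trace_nonneg_of_psd h2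
  _ = (A*B).trace := by rw [Matrix.trace_mul_cycle, hA.sqrt_mul_self]

lemma trace_conjTranspose_mul_re (X Y : Matrix n n ℂ) :
    (Xᴴ * Y).trace.re = ∑ p : n × n, ((starRingEnd ℂ) (X p.2 p.1) * Y p.2 p.1).re := by
  rw [← Finset.univ_product_univ, Finset.sum_product]
  simp [Matrix.trace, Matrix.mul_apply, Matrix.conjTranspose_apply, Matrix.diag,
    Complex.re_sum]

lemma conj_mul_self_re (z : ℂ) : ((starRingEnd ℂ) z * z).re = ‖z‖ ^ 2 := by
  simp [Complex.conj_mul', ← Complex.ofReal_pow]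

lemma trace_CS (X Y : Matrix n n ℂ) :
    (Xᴴ * Y).trace.re ≤
      Real.sqrt ((Xᴴ * X).trace.re) * Real.sqrt ((Yᴴ * Y).trace.re) := by
  have hX : (Xᴴ * X).trace.re = ∑ p : n × n, ‖X p.2 p.1‖ ^ 2 := by
    rw [trace_conjTranspose_mul_re]
    exact Finset.sum_congr rfl fun p _ => conj_mul_self_re _
  have hY : (Yᴴ * Y).trace.re = ∑ p : n × n, ‖Y p.2 p.1‖ ^ 2 := by
    rw [trace_conjTranspose_mul_re]
    exact Finset.sum_congr rfl fun p _ => conj_mul_self_re _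
  rw [hX, hY, trace_conjTranspose_mul_re]
  calc ∑ p : n × n, ((starRingEnd ℂ) (X p.2 p.1) * Y p.2 p.1).re
      ≤ ∑ p : n × n, ‖X p.2 p.1‖ * ‖Y p.2 p.1‖ := by
        apply Finset.sum_le_sum
        intro p _
        calc ((starRingEnd ℂ) (X p.2 p.1) * Y p.2 p.1).re
            ≤ ‖(starRingEnd ℂ) (X p.2 p.1) * Y p.2 p.1‖ := Complex.re_le_norm _
          _ = ‖X p.2 p.1‖ * ‖Y p.2 p.1‖ := by
              rw [norm_mul, Complex.norm_conj]
    _ ≤ _ := Real.sum_mul_le_sqrt_mul_sqrt _ _ _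

lemma conjdiag_herm (U : Matrix n n ℂ) (d : n → ℝ) :
    (U * Matrix.diagonal ((↑) ∘ d) * star U)ᴴ = U * Matrix.diagonal ((↑) ∘ d) * star U := by
  have hD : (Matrix.diagonal ((↑) ∘ d : n → ℂ))ᴴ = Matrix.diagonal ((↑) ∘ d) := by
    ext i j
    by_cases h : i = j
    · simp [h, Complex.conj_ofReal]
    · simp [Matrix.diagonal_apply, h, Ne.symm h]
  simp only [Matrix.star_eq_conjTranspose, Matrix.conjTranspose_mul,
    Matrix.conjTranspose_conjTranspose, hD, Matrix.mul_assoc]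

lemma conjdiag_mul {U : Matrix n n ℂ} (hU1 : star U * U = 1) (d d' : n → ℝ) :
    (U * Matrix.diagonal ((↑) ∘ d) * star U) * (U * Matrix.diagonal ((↑) ∘ d') * star U) =
      U * Matrix.diagonal ((↑) ∘ fun i => d i * d' i) * star U := by
  have cancel : ∀ X : Matrix n n ℂ, star U * (U * X) = X := by
    intro X
    rw [← Matrix.mul_assoc, hU1, Matrix.one_mul]
  have hDD : Matrix.diagonal ((↑) ∘ d : n → ℂ) * (Matrix.diagonal ((↑) ∘ d') * star U) =
      Matrix.diagonal ((↑) ∘ fun i => d i * d' i) * star U := by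
    rw [← Matrix.mul_assoc, Matrix.diagonal_mul_diagonal]
    have : (fun i => (Complex.ofReal ∘ d) i * (Complex.ofReal ∘ d') i) =
        (Complex.ofReal ∘ fun i => d i * d' i) := by
      funext i
      simp
    rw [this]
  simp only [Matrix.mul_assoc]
  rw [cancel, hDD]

lemma diag_congr (U : Matrix n n ℂ) {f f' : n → ℝ} (h : ∀ i, f i = f' i) :
    U * Matrix.diagonal ((↑) ∘ f) * star U = U * Matrix.diagonal ((↑) ∘ f') * star U := by
  have : f = f' := funext h
  rw [this]

lemma polar_exists (A : Matrix n n ℂ) :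
    ∃ W : Matrix n n ℂ, Wᴴ * A = (Matrix.posSemidef_conjTranspose_mul_self A).sqrt ∧
      (1 - W * Wᴴ).PosSemidef := by
  set hH := Matrix.posSemidef_conjTranspose_mul_self A with hHdef
  set U : Matrix n n ℂ := (hH.1.eigenvectorUnitary : Matrix n n ℂ) with hUdef
  set e : n → ℝ := hH.1.eigenvalues with hedef
  have hU1 : star U * U = 1 := Matrix.mem_unitaryGroup_iff'.mp hH.1.eigenvectorUnitary.2
  have hU2 : U * star U = 1 := Matrix.mem_unitaryGroup_iff.mp hH.1.eigenvectorUnitary.2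
  have hmul : ∀ f g : ℝ → ℝ,
      (U * Matrix.diagonal ((↑) ∘ (f ∘ e)) * star U) *
        (U * Matrix.diagonal ((↑) ∘ (g ∘ e)) * star U) =
      U * Matrix.diagonal ((↑) ∘ ((fun x => f x * g x) ∘ e)) * star U := by
    intro f g
    rw [conjdiag_mul hU1]
    rfl
  have hspec : Aᴴ * A = U * Matrix.diagonal ((↑) ∘ (id ∘ e)) * star U := by
    simpa using hH.1.spectral_theorem
  have hsqrt : hH.sqrt = U * Matrix.diagonal ((↑) ∘ (Real.sqrt ∘ e)) * star U := rfl
  set g : ℝ → ℝ := fun x => if x = 0 then 0 else (Real.sqrt x)⁻¹ with hgdef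
  set χ : ℝ → ℝ := fun x => if 0 < x then 1 else 0 with hχdef
  have hsneg : ∀ x : ℝ, x < 0 → Real.sqrt x = 0 := fun x hx => Real.sqrt_eq_zero'.mpr hx.le
  have hgx : ∀ x : ℝ, g x * x = Real.sqrt x := by
    intro x
    rcases lt_trichotomy x 0 with h | h | h
    · simp [hgdef, h.ne, hsneg x h]
    · simp [hgdef, h]
    · have hs : Real.sqrt x ≠ 0 := by positivity
      have hx : x = Real.sqrt x * Real.sqrt x := (Real.mul_self_sqrt h.le).symm
      simp only [hgdef, if_neg h.ne']
      rw [hx]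
      field_simp
      rw [Real.sqrt_sq (Real.sqrt_nonneg x)]
  have hgxg : ∀ x : ℝ, g x * x * g x = χ x := by
    intro x
    rw [hgx]
    rcases lt_trichotomy x 0 with h | h | h
    · simp [hgdef, hχdef, not_lt.mpr h.le, hsneg x h, h.ne]
    · simp [hgdef, hχdef, h]
    · have hs : Real.sqrt x ≠ 0 := by positivity
      simp [hgdef, hχdef, h, h.ne', hs]
  have hgχ : ∀ x : ℝ, g x * χ x = g x := by
    intro x
    rcases lt_trichotomy x 0 with h | h | h
    · simp [hgdef, hχdef, not_lt.mpr h.le, h.ne, hsneg x h]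
    · simp [hgdef, hχdef, h]
    · simp [hχdef, h]
  obtain ⟨Pg, hPgdef⟩ : ∃ Pg : Matrix n n ℂ,
      Pg = U * Matrix.diagonal ((↑) ∘ (g ∘ e)) * star U := ⟨_, rfl⟩
  have hPgherm : Pgᴴ = Pg := by rw [hPgdef]; exact conjdiag_herm U (g ∘ e)
  refine ⟨A * Pg, ?_, ?_⟩
  · have h1 : (A * Pg)ᴴ * A = Pg * (Aᴴ * A) := by
      rw [Matrix.conjTranspose_mul, hPgherm, Matrix.mul_assoc]
    rw [h1, hsqrt]
    conv_lhs => rw [hspec, hPgdef]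
    rw [hmul]
    exact diag_congr U fun i => hgx (e i)
  · obtain ⟨W, hWdef⟩ : ∃ W : Matrix n n ℂ, W = A * Pg := ⟨_, rfl⟩
    rw [show A * Pg = W from hWdef.symm]
    have hQ : Wᴴ * W = U * Matrix.diagonal ((↑) ∘ (χ ∘ e)) * star U := by
      rw [hWdef, Matrix.conjTranspose_mul, hPgherm, ← hWdef]
      rw [show Pg * Aᴴ * W = Pg * Aᴴ * (A * Pg) from by rw [hWdef]]
      calc Pg * Aᴴ * (A * Pg) = Pg * (Aᴴ * A) * Pg := by
            simp only [Matrix.mul_assoc]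
        _ = _ := by
            conv_lhs => rw [hspec, hPgdef]
            rw [hmul, hmul]
            exact diag_congr U fun i => by
              simp only [Function.comp_apply, id_eq]
              exact hgxg (e i)
    have hWQ : W * (U * Matrix.diagonal ((↑) ∘ (χ ∘ e)) * star U) = W := by
      conv_lhs => rw [hWdef, hPgdef]
      rw [Matrix.mul_assoc, hmul]
      rw [diag_congr U (f := (fun x => g x * χ x) ∘ e) (f' := g ∘ e) fun i => hgχ (e i)]
      rw [← hPgdef, ← hWdef]
    have hidem : (W * Wᴴ) * (W * Wᴴ) = W * Wᴴ := by
      calc (W * Wᴴ) * (W * Wᴴ) = W * (Wᴴ * W) * Wᴴ := by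
            rw [Matrix.mul_assoc, Matrix.mul_assoc, Matrix.mul_assoc]
        _ = W * Wᴴ := by rw [hQ, hWQ]
    have hhermS : (W * Wᴴ)ᴴ = W * Wᴴ := by
      rw [Matrix.conjTranspose_mul, Matrix.conjTranspose_conjTranspose]
    have hR : (1 - W * Wᴴ)ᴴ * (1 - W * Wᴴ) = 1 - W * Wᴴ := by
      rw [Matrix.conjTranspose_sub, Matrix.conjTranspose_one, hhermS,
        Matrix.sub_mul, Matrix.mul_sub, Matrix.mul_sub, hidem, Matrix.one_mul, Matrix.mul_one]
      simp
    have := Matrix.posSemidef_conjTranspose_mul_self (1 - W * Wᴴ)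
    rwa [hR] at this

set_option maxHeartbeats 1000000 in
lemma classical_bound {C : Type*} [Fintype C] [DecidableEq C] (p q : C → ℝ)
    (hp0 : ∀ c, 0 ≤ p c) (hq0 : ∀ c, 0 ≤ q c)
    (hp1 : ∑ c, p c = 1) (hq1 : ∑ c, q c = 1)
    (cstar c0 : C) (hne : c0 ≠ cstar) (hmax : p c0 ≤ p cstar) (hadv : q cstar ≤ q c0) :
    (∑ c, Real.sqrt (q c) * Real.sqrt (p c)) ^ 2 ≤
      1 - (1 / 2) * (Real.sqrt (p cstar) - Real.sqrt (p c0)) ^ 2 := by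
  have hc0mem : c0 ∈ Finset.univ.erase cstar := Finset.mem_erase.mpr ⟨hne, Finset.mem_univ _⟩
  set s : Finset C := (Finset.univ.erase cstar).erase c0 with hsdef
  have hsplit : ∀ f : C → ℝ, ∑ c, f c = f cstar + (f c0 + ∑ c ∈ s, f c) := by
    intro f
    rw [← Finset.add_sum_erase _ f (Finset.mem_univ cstar), ← Finset.add_sum_erase _ f hc0mem]
  set astar := Real.sqrt (p cstar)
  set a0 := Real.sqrt (p c0)
  set bstar := Real.sqrt (q cstar)
  set b0 := Real.sqrt (q c0)
  have ha : a0 ≤ astar := Real.sqrt_le_sqrt hmax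
  have hb : bstar ≤ b0 := Real.sqrt_le_sqrt hadv
  have ha0 : 0 ≤ a0 := Real.sqrt_nonneg _
  have hastar : 0 ≤ astar := Real.sqrt_nonneg _
  have hb0 : 0 ≤ b0 := Real.sqrt_nonneg _
  have hbstar : 0 ≤ bstar := Real.sqrt_nonneg _
  set P2 := ∑ c ∈ s, p c with hP2def
  set Q2 := ∑ c ∈ s, q c with hQ2def
  have hP2 : 0 ≤ P2 := Finset.sum_nonneg fun c _ => hp0 c
  have hQ2 : 0 ≤ Q2 := Finset.sum_nonneg fun c _ => hq0 c
  have hpsum : astar ^ 2 + a0 ^ 2 + P2 = 1 := by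
    rw [Real.sq_sqrt (hp0 cstar), Real.sq_sqrt (hp0 c0)]
    rw [← hp1, hsplit p]
    ring
  have hqsum : bstar ^ 2 + b0 ^ 2 + Q2 = 1 := by
    rw [Real.sq_sqrt (hq0 cstar), Real.sq_sqrt (hq0 c0)]
    rw [← hq1, hsplit q]
    ring
  -- bound the tail sum
  have htail : ∑ c ∈ s, Real.sqrt (q c) * Real.sqrt (p c) ≤
      Real.sqrt Q2 * Real.sqrt P2 := by
    have := Real.sum_mul_le_sqrt_mul_sqrt s (fun c => Real.sqrt (q c)) (fun c => Real.sqrt (p c))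
    refine this.trans ?_
    have e1 : ∑ c ∈ s, Real.sqrt (q c) ^ 2 = Q2 :=
      Finset.sum_congr rfl fun c _ => Real.sq_sqrt (hq0 c)
    have e2 : ∑ c ∈ s, Real.sqrt (p c) ^ 2 = P2 :=
      Finset.sum_congr rfl fun c _ => Real.sq_sqrt (hp0 c)
    rw [e1, e2]
  -- head bound
  have hhead : bstar * astar + b0 * a0 ≤ (astar + a0) * (bstar + b0) / 2 := by
    nlinarith [mul_nonneg (sub_nonneg.mpr ha) (sub_nonneg.mpr hb)]
  have hB : ∑ c, Real.sqrt (q c) * Real.sqrt (p c) ≤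
      (astar + a0) * (bstar + b0) / 2 + Real.sqrt Q2 * Real.sqrt P2 := by
    rw [hsplit fun c => Real.sqrt (q c) * Real.sqrt (p c)]
    have := add_le_add hhead htail
    linarith
  have hBnn : 0 ≤ ∑ c, Real.sqrt (q c) * Real.sqrt (p c) :=
    Finset.sum_nonneg fun c _ => mul_nonneg (Real.sqrt_nonneg _) (Real.sqrt_nonneg _)
  have hsqP : Real.sqrt P2 ^ 2 = P2 := Real.sq_sqrt hP2
  have hsqQ : Real.sqrt Q2 ^ 2 = Q2 := Real.sq_sqrt hQ2
  have hRHSnn : 0 ≤ (astar + a0) * (bstar + b0) / 2 + Real.sqrt Q2 * Real.sqrt P2 := by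
    have : 0 ≤ (astar + a0) * (bstar + b0) := by positivity
    have : 0 ≤ Real.sqrt Q2 * Real.sqrt P2 := by positivity
    positivity
  have step1 : (∑ c, Real.sqrt (q c) * Real.sqrt (p c)) ^ 2 ≤
      ((astar + a0) * (bstar + b0) / 2 + Real.sqrt Q2 * Real.sqrt P2) ^ 2 :=
    pow_le_pow_left₀ hBnn hB 2
  have step2 : ((astar + a0) * (bstar + b0) / 2 + Real.sqrt Q2 * Real.sqrt P2) ^ 2 ≤
      ((astar + a0) ^ 2 / 2 + P2) * ((bstar + b0) ^ 2 / 2 + Q2) := by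
    nlinarith [sq_nonneg ((astar + a0) * Real.sqrt Q2 - (bstar + b0) * Real.sqrt P2),
      Real.sqrt_nonneg P2, Real.sqrt_nonneg Q2, hsqP, hsqQ]
  have step3 : (bstar + b0) ^ 2 / 2 + Q2 ≤ 1 := by nlinarith [sq_nonneg (bstar - b0)]
  have step4 : (astar + a0) ^ 2 / 2 + P2 = 1 - (1 / 2) * (astar - a0) ^ 2 := by
    nlinarith [hpsum]
  have h5 : 0 ≤ (astar + a0) ^ 2 / 2 + P2 := by positivity
  calc (∑ c, Real.sqrt (q c) * Real.sqrt (p c)) ^ 2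
      ≤ ((astar + a0) ^ 2 / 2 + P2) * ((bstar + b0) ^ 2 / 2 + Q2) := step1.trans step2
    _ ≤ ((astar + a0) ^ 2 / 2 + P2) * 1 := by
        exact mul_le_mul_of_nonneg_left step3 h5
    _ = 1 - (1 / 2) * (astar - a0) ^ 2 := by rw [mul_one, step4]

lemma psdSqrt_eq {N : ℕ} {A : Matrix (Fin N) (Fin N) ℂ} (hA : A.PosSemidef) :
    psdSqrt A = hA.sqrt := dif_pos hA

lemma sqrt_congr {A B : Matrix n n ℂ} (hA : A.PosSemidef) (hB : B.PosSemidef) (h : A = B) :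
    hA.sqrt = hB.sqrt := by subst h; rfl

lemma rootFidelity_nonneg {N : ℕ} {ρ σ : Matrix (Fin N) (Fin N) ℂ}
    (hρ : ρ.PosSemidef) (hσ : σ.PosSemidef) : 0 ≤ rootFidelity ρ σ := by
  have hs : (psdSqrt ρ).PosSemidef := by rw [psdSqrt_eq hρ]; exact hρ.posSemidef_sqrt
  have h2 : (psdSqrt ρ * σ * psdSqrt ρ).PosSemidef := by
    have := hσ.mul_mul_conjTranspose_same (psdSqrt ρ)
    rwa [hs.1.eq] at this
  rw [rootFidelity, psdSqrt_eq h2]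
  exact (Complex.nonneg_iff.mp (trace_nonneg_of_psd h2.posSemidef_sqrt)).1

lemma rootFidelity_le_sum {N : ℕ} {C : Type*} [Fintype C]
    {ρ σ : Matrix (Fin N) (Fin N) ℂ} (hρ : ρ.PosSemidef) (hσ : σ.PosSemidef)
    {M : C → Matrix (Fin N) (Fin N) ℂ} (hM : ∀ c, (M c).PosSemidef)
    (hMsum : ∑ c, M c = 1) :
    rootFidelity ρ σ ≤
      ∑ c, Real.sqrt ((M c * σ).trace.re) * Real.sqrt ((M c * ρ).trace.re) := by
  set sρ := psdSqrt ρ with hsρdef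
  set sσ := psdSqrt σ with hsσdef
  have hsρ : sρ.PosSemidef := by rw [hsρdef, psdSqrt_eq hρ]; exact hρ.posSemidef_sqrt
  have hsσ : sσ.PosSemidef := by rw [hsσdef, psdSqrt_eq hσ]; exact hσ.posSemidef_sqrt
  have hsρh : sρᴴ = sρ := hsρ.1.eq
  have hsσh : sσᴴ = sσ := hsσ.1.eq
  have hsρ2 : sρ * sρ = ρ := by rw [hsρdef, psdSqrt_eq hρ]; exact hρ.sqrt_mul_self
  have hsσ2 : sσ * sσ = σ := by rw [hsσdef, psdSqrt_eq hσ]; exact hσ.sqrt_mul_self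
  set A := sσ * sρ with hAdef
  have h1 : Aᴴ * A = sρ * σ * sρ := by
    rw [hAdef, Matrix.conjTranspose_mul, hsρh, hsσh]
    calc sρ * sσ * (sσ * sρ) = sρ * (sσ * sσ) * sρ := by simp only [Matrix.mul_assoc]
      _ = sρ * σ * sρ := by rw [hsσ2]
  have h2 : (sρ * σ * sρ).PosSemidef := by
    have := hσ.mul_mul_conjTranspose_same sρ
    rwa [hsρh] at this
  obtain ⟨W, hWA, hWW⟩ := polar_exists A
  have hrf : rootFidelity ρ σ = (Wᴴ * A).trace.re := by
    rw [rootFidelity, ← hsρdef, psdSqrt_eq h2, hWA]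
    rw [sqrt_congr (Matrix.posSemidef_conjTranspose_mul_self A) h2 h1]
  rw [hrf]
  have hdec : Wᴴ * A = ∑ c, Wᴴ * (sσ * (M c * sρ)) := by
    have : A = ∑ c, sσ * (M c * sρ) := by
      calc A = sσ * ((∑ c, M c) * sρ) := by rw [hMsum, Matrix.one_mul, hAdef]
        _ = ∑ c, sσ * (M c * sρ) := by rw [Finset.sum_mul, Finset.mul_sum]
    rw [this, Finset.mul_sum]
  rw [hdec, Matrix.trace_sum, Complex.re_sum]
  apply Finset.sum_le_sum
  intro c _
  set m := (hM c).sqrt with hmdef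
  have hmh : mᴴ = m := (hM c).posSemidef_sqrt.1.eq
  have hm2 : m * m = M c := (hM c).sqrt_mul_self
  have key : Wᴴ * (sσ * (M c * sρ)) = (m * (sσ * W))ᴴ * (m * sρ) := by
    rw [Matrix.conjTranspose_mul, Matrix.conjTranspose_mul, hmh, hsσh, ← hm2]
    simp only [Matrix.mul_assoc]
  rw [key]
  have CS := trace_CS (m * (sσ * W)) (m * sρ)
  refine CS.trans ?_
  -- second factor equals Tr(M c ρ)
  have f2 : ((m * sρ)ᴴ * (m * sρ)).trace = (M c * ρ).trace := by
    rw [Matrix.conjTranspose_mul, hmh, hsρh]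
    calc (sρ * m * (m * sρ)).trace = (sρ * (m * (m * sρ))).trace := by
          simp only [Matrix.mul_assoc]
      _ = ((m * (m * sρ)) * sρ).trace := by rw [Matrix.trace_mul_comm]
      _ = (M c * ρ).trace := by
          rw [← hsρ2, ← hm2]
          simp only [Matrix.mul_assoc]
  -- first factor bounded by Tr(M c σ)
  have f1 : ((m * (sσ * W))ᴴ * (m * (sσ * W))).trace.re ≤ (M c * σ).trace.re := by
    have e1 : (m * (sσ * W))ᴴ * (m * (sσ * W)) = Wᴴ * ((sσ * (M c * sσ)) * W) := by
      rw [Matrix.conjTranspose_mul, Matrix.conjTranspose_mul, hmh, hsσh, ← hm2]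
      simp only [Matrix.mul_assoc]
    have hB : (sσ * (M c * sσ)).PosSemidef := by
      have := (hM c).mul_mul_conjTranspose_same sσ
      rwa [hsσh, Matrix.mul_assoc] at this
    have e2 : (Wᴴ * ((sσ * (M c * sσ)) * W)).trace = ((sσ * (M c * sσ)) * (W * Wᴴ)).trace := by
      rw [Matrix.trace_mul_comm, Matrix.mul_assoc]
    have e3 : (sσ * (M c * sσ)).trace = (M c * σ).trace := by
      rw [Matrix.trace_mul_comm, ← hsσ2, Matrix.mul_assoc]
    have hdiff : 0 ≤ ((sσ * (M c * sσ)) * (1 - W * Wᴴ)).trace := trace_mul_psd_nonneg hB hWW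
    have hexp : ((sσ * (M c * sσ)) * (1 - W * Wᴴ)).trace
        = (sσ * (M c * sσ)).trace - ((sσ * (M c * sσ)) * (W * Wᴴ)).trace := by
      rw [Matrix.mul_sub, Matrix.mul_one, Matrix.trace_sub]
    rw [e1, e2, ← e3]
    have := (Complex.nonneg_iff.mp hdiff).1
    rw [hexp, Complex.sub_re] at this
    linarith
  calc Real.sqrt (((m * (sσ * W))ᴴ * (m * (sσ * W))).trace.re) *
        Real.sqrt (((m * sρ)ᴴ * (m * sρ)).trace.re)
      ≤ Real.sqrt ((M c * σ).trace.re) * Real.sqrt (((m * sρ)ᴴ * (m * sρ)).trace.re) := by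
        exact mul_le_mul_of_nonneg_right (Real.sqrt_le_sqrt f1) (Real.sqrt_nonneg _)
    _ = _ := by rw [f2]


end Helpers

/-- **Sandwich robustness bound** `ε_RLB(ρ) ≤ ε*(ρ) ≤ ε_RUB(ρ)`:
the certified lower bound from the measurement distribution underestimates the exact
robustness radius, and any adversarially misclassified state gives an upper bound. -/
theorem sandwich_robustness_bound
    {N : ℕ} {C K : Type*} [Fintype C] [DecidableEq C] [Fintype K]
    (hC : 1 < Fintype.card C)
    (M : C → Matrix (Fin N) (Fin N) ℂ) (hM : IsPOVM M)
    (E : K → Matrix (Fin N) (Fin N) ℂ) (hE : IsKrausFamily E)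
    (ρ : Matrix (Fin N) (Fin N) ℂ) (hρ : IsDensityMatrix ρ)
    (p : C → ℝ) (hp : ∀ c, (p c : ℂ) = (M c * channel E ρ).trace)
    (cstar : C) (hcstar : ∀ c, p c ≤ p cstar)
    (εRLB : ℝ)
    (hRLB : εRLB =
      minErase cstar hC fun c => (1 / 2) * (Real.sqrt (p cstar) - Real.sqrt (p c)) ^ 2)
    (εstar : EReal)
    (hstar : εstar = sInf ((fun σ => ((1 - fidelity ρ σ : ℝ) : EReal)) ''
      {σ | IsDensityMatrix σ ∧
        ∃ c, c ≠ cstar ∧ ((M cstar - M c) * channel E σ).trace ≤ 0})) :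
    (εRLB : EReal) ≤ εstar ∧
      ∀ σadv : Matrix (Fin N) (Fin N) ℂ, IsDensityMatrix σadv →
        (∃ c, c ≠ cstar ∧ ((M cstar - M c) * channel E σadv).trace ≤ 0) →
        εstar ≤ ((1 - fidelity ρ σadv : ℝ) : EReal) := by
  classical
  -- the effective POVM pulled back through the channel
  set M' : C → Matrix (Fin N) (Fin N) ℂ := fun c => ∑ k, (E k)ᴴ * M c * E k with hM'def
  have hM'psd : ∀ c, (M' c).PosSemidef := by
    intro c
    exact Finset.sum_induction _ _ (fun a b ha hb => ha.add hb) Matrix.PosSemidef.zero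
      (fun k _ => (hM.1 c).conjTranspose_mul_mul_same (E k))
  have hM'sum : ∑ c, M' c = 1 := by
    calc ∑ c, M' c = ∑ k, ∑ c, (E k)ᴴ * M c * E k := Finset.sum_comm
      _ = ∑ k, (E k)ᴴ * E k := by
          refine Finset.sum_congr rfl fun k _ => ?_
          rw [show ∑ c, (E k)ᴴ * M c * E k = (E k)ᴴ * (∑ c, M c) * E k from by
            rw [Finset.mul_sum, Finset.sum_mul]]
          rw [hM.2, Matrix.mul_one]
      _ = 1 := hE
  have htr : ∀ (c : C) (τ : Matrix (Fin N) (Fin N) ℂ),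
      (M c * channel E τ).trace = (M' c * τ).trace := by
    intro c τ
    rw [channel, Finset.mul_sum, Matrix.trace_sum,
      show M' c * τ = ∑ k, (E k)ᴴ * M c * E k * τ from by rw [hM'def, Finset.sum_mul],
      Matrix.trace_sum]
    refine Finset.sum_congr rfl fun k _ => ?_
    rw [show M c * (E k * τ * (E k)ᴴ) = (M c * (E k * τ)) * (E k)ᴴ from by
      simp only [Matrix.mul_assoc]]
    rw [Matrix.trace_mul_comm]
    simp only [Matrix.mul_assoc]
  have hpc : ∀ c, p c = ((M' c) * ρ).trace.re := by
    intro c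
    have h := hp c
    rw [htr] at h
    rw [← h, Complex.ofReal_re]
  have hp0 : ∀ c, 0 ≤ p c := by
    intro c
    rw [hpc c]
    exact (Complex.nonneg_iff.mp (trace_mul_psd_nonneg (hM'psd c) hρ.1)).1
  have hp1 : ∑ c, p c = 1 := by
    have h : ∑ c, ((M' c) * ρ).trace = 1 := by
      rw [← Matrix.trace_sum, ← Finset.sum_mul, hM'sum, Matrix.one_mul, hρ.2]
    calc ∑ c, p c = (∑ c, ((M' c) * ρ).trace).re := by
          rw [Complex.re_sum]
          exact Finset.sum_congr rfl fun c _ => hpc c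
      _ = 1 := by rw [h, Complex.one_re]
  -- the key real inequality, for any misclassified density matrix σ
  have key : ∀ σ : Matrix (Fin N) (Fin N) ℂ, IsDensityMatrix σ →
      (∃ c, c ≠ cstar ∧ ((M cstar - M c) * channel E σ).trace ≤ 0) →
      εRLB ≤ 1 - fidelity ρ σ := by
    rintro σ hσdm ⟨c0, hc0ne, hmis⟩
    set q : C → ℝ := fun c => ((M' c) * σ).trace.re with hqdef
    have hq0 : ∀ c, 0 ≤ q c := fun c =>
      (Complex.nonneg_iff.mp (trace_mul_psd_nonneg (hM'psd c) hσdm.1)).1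
    have hq1 : ∑ c, q c = 1 := by
      have h : ∑ c, ((M' c) * σ).trace = 1 := by
        rw [← Matrix.trace_sum, ← Finset.sum_mul, hM'sum, Matrix.one_mul, hσdm.2]
      calc ∑ c, q c = (∑ c, ((M' c) * σ).trace).re := by rw [Complex.re_sum]
        _ = 1 := by rw [h, Complex.one_re]
    have hadv : q cstar ≤ q c0 := by
      rw [Matrix.sub_mul, Matrix.trace_sub] at hmis
      have h := (Complex.le_def.mp hmis).1
      rw [Complex.sub_re, Complex.zero_re] at h
      have e1 : q cstar = (M cstar * channel E σ).trace.re := by rw [hqdef]; rw [htr]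
      have e2 : q c0 = (M c0 * channel E σ).trace.re := by rw [hqdef]; rw [htr]
      rw [e1, e2]
      linarith
    have hrle := rootFidelity_le_sum hρ.1 hσdm.1 hM'psd hM'sum
    have hrle' : rootFidelity ρ σ ≤ ∑ c, Real.sqrt (q c) * Real.sqrt (p c) := by
      refine hrle.trans_eq (Finset.sum_congr rfl fun c _ => ?_)
      rw [hpc c]
    have hFB : fidelity ρ σ ≤ (∑ c, Real.sqrt (q c) * Real.sqrt (p c)) ^ 2 := by
      rw [fidelity]
      exact pow_le_pow_left₀ (rootFidelity_nonneg hρ.1 hσdm.1) hrle' 2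
    have hclass := classical_bound p q hp0 hq0 hp1 hq1 cstar c0 hc0ne (hcstar c0) hadv
    have hRLBle : εRLB ≤ (1 / 2) * (Real.sqrt (p cstar) - Real.sqrt (p c0)) ^ 2 := by
      rw [hRLB]
      exact Finset.inf'_le _ (Finset.mem_erase.mpr ⟨hc0ne, Finset.mem_univ _⟩)
    linarith
  constructor
  · rw [hstar]
    apply le_sInf
    rintro x ⟨σ, ⟨hσdm, c0, hc0ne, hmis⟩, rfl⟩
    have := key σ hσdm ⟨c0, hc0ne, hmis⟩
    exact EReal.coe_le_coe_iff.mpr this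
  · intro σadv hdm hex
    rw [hstar]
    exact sInf_le ⟨σadv, ⟨hdm, hex⟩, rfl⟩
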